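/- arXiv:1001.2662 — 2 statements merged into one kernel-verified Lean document; each statement's English description precedes it below -/
import Mathlib

section
/- For any q-ary DMC W, bijective kernel g : 𝒳^ℓ → 𝒳^ℓ, index i ∈ {0,…,ℓ-1}, prefix u₀^{i-1} ∈ 𝒳^i, and x, x' ∈ 𝒳 with x ≠ x', the Bhattacharyya parameter of the conditioned subchannel satisfies (1/q^{2(ℓ-1-i)}) · Z_min(W)^{D^{(i)}_{x,x'}(u₀^{i-1})} ≤ Z_{x,x'}(W^{(i)}_{u₀^{i-1}}) ≤ q^{ℓ-1-i} · Z_max(W)^{D^{(i)}_{x,x'}(u₀^{i-1})}. -/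
open MeasureTheory Filter Real
open scoped Classical

noncomputable section

namespace Polar

/-- `IsChannel W` : `W x y` is the probability of output `y` given input `x`,
each row is a probability distribution. -/
def IsChannel {X Y : Type*} (W : X → Y → ℝ) : Prop :=
  (∀ x y, 0 ≤ W x y) ∧ ∀ x, HasSum (W x) 1

/-- Bhattacharyya parameter `Z_{x,x'}(W)` between inputs `x` and `x'`. -/
def Zb {X Y : Type*} (W : X → Y → ℝ) (x x' : X) : ℝ :=
  ∑' y, Real.sqrt (W x y * W x' y)

/-- `Z_max(W) = max_{x ≠ x'} Z_{x,x'}(W)`. -/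
def Zmax {X Y : Type*} (W : X → Y → ℝ) : ℝ :=
  sSup {z | ∃ x x', x ≠ x' ∧ z = Zb W x x'}

/-- `Z_min(W) = min_{x,x'} Z_{x,x'}(W)`. -/
def Zmin {X Y : Type*} (W : X → Y → ℝ) : ℝ :=
  sInf {z | ∃ x x', z = Zb W x x'}

/-- The conditioned subchannel `W^{(i)}_{u_0^{i-1}} : X → Y^ℓ`. -/
def condSubCh {X Y : Type*} [Fintype X] {ℓ : ℕ} (W : X → Y → ℝ)
    (g : (Fin ℓ → X) → Fin ℓ → X) (i : Fin ℓ) (up : Fin i → X) :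
    X → (Fin ℓ → Y) → ℝ :=
  fun ui y =>
    (1 / (Fintype.card X : ℝ) ^ (ℓ - 1 - i.1)) *
      ∑ u : Fin ℓ → X,
        (if u i = ui ∧ (∀ j : Fin i, u ⟨j.1, j.2.trans i.2⟩ = up j) then
          ∏ j, W (g u j) (y j) else 0)

/-- Partial distance `D^{(i)}_{x,x'}(u_0^{i-1})` of the kernel `g`. -/
def partialDist {X : Type*} {ℓ : ℕ} (g : (Fin ℓ → X) → Fin ℓ → X) (i : Fin ℓ)
    (up : Fin i → X) (x x' : X) : ℕ :=
  sInf {d | ∃ v w : Fin ℓ → X,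
    (v i = x ∧ ∀ j : Fin i, v ⟨j.1, j.2.trans i.2⟩ = up j) ∧
    (w i = x' ∧ ∀ j : Fin i, w ⟨j.1, j.2.trans i.2⟩ = up j) ∧
    hammingDist (g v) (g w) = d}

section Aux
lemma sqrt_add_le' {a b : ℝ} (ha : 0 ≤ a) (hb : 0 ≤ b) :
    Real.sqrt (a + b) ≤ Real.sqrt a + Real.sqrt b := by
  rw [show a + b = Real.sqrt a ^ 2 + Real.sqrt b ^ 2 by
    rw [Real.sq_sqrt ha, Real.sq_sqrt hb]]
  calc Real.sqrt (Real.sqrt a ^ 2 + Real.sqrt b ^ 2)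
      ≤ Real.sqrt ((Real.sqrt a + Real.sqrt b) ^ 2) := by
        apply Real.sqrt_le_sqrt
        nlinarith [Real.sqrt_nonneg a, Real.sqrt_nonneg b]
    _ = Real.sqrt a + Real.sqrt b := Real.sqrt_sq (by positivity)

lemma sqrt_sum_le {α : Type*} (s : Finset α) (f : α → ℝ) (hf : ∀ a ∈ s, 0 ≤ f a) :
    Real.sqrt (∑ a ∈ s, f a) ≤ ∑ a ∈ s, Real.sqrt (f a) := by
  classical
  induction s using Finset.induction_on with
  | empty => simp
  | @insert a s hnot ih =>

    rw [Finset.sum_insert hnot, Finset.sum_insert hnot]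
    calc Real.sqrt (f a + ∑ b ∈ s, f b)
        ≤ Real.sqrt (f a) + Real.sqrt (∑ b ∈ s, f b) :=
          sqrt_add_le' (hf a (Finset.mem_insert_self a s))
            (Finset.sum_nonneg fun b hb => hf b (Finset.mem_insert_of_mem hb))
      _ ≤ _ := by
          gcongr
          exact ih fun b hb => hf b (Finset.mem_insert_of_mem hb)

lemma sqrt_prod' {α : Type*} (s : Finset α) (f : α → ℝ) (hf : ∀ a ∈ s, 0 ≤ f a) :
    Real.sqrt (∏ a ∈ s, f a) = ∏ a ∈ s, Real.sqrt (f a) := by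
  classical
  induction s using Finset.induction_on with
  | empty => simp
  | @insert a s hnot ih =>

    rw [Finset.prod_insert hnot, Finset.prod_insert hnot,
      Real.sqrt_mul (hf a (Finset.mem_insert_self a s)),
      ih fun b hb => hf b (Finset.mem_insert_of_mem hb)]


variable {X Y : Type*} {W : X → Y → ℝ}

lemma summable_sqrt (hW : IsChannel W) (x x' : X) :
    Summable fun y => Real.sqrt (W x y * W x' y) := by
  apply Summable.of_nonneg_of_le (fun y => Real.sqrt_nonneg _)
    (f := fun y => (W x y + W x' y) / 2) ?_
    (((hW.2 x).summable.add (hW.2 x').summable).div_const 2)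
  · intro y
    show Real.sqrt (W x y * W x' y) ≤ (W x y + W x' y) / 2
    rw [show (W x y + W x' y) / 2 = Real.sqrt (((W x y + W x' y) / 2) ^ 2) from
      (Real.sqrt_sq (by have := hW.1 x y; have := hW.1 x' y; positivity)).symm]
    apply Real.sqrt_le_sqrt
    nlinarith [hW.1 x y, hW.1 x' y, sq_nonneg (W x y - W x' y)]

lemma Zb_nonneg (W : X → Y → ℝ) (x x' : X) : 0 ≤ Zb W x x' :=
  tsum_nonneg fun y => Real.sqrt_nonneg _

lemma Zb_le_one (hW : IsChannel W) (x x' : X) : Zb W x x' ≤ 1 := by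
  have h : ∑' y, (W x y + W x' y) / 2 = 1 := by
    rw [tsum_div_const, ((hW.2 x).add (hW.2 x')).tsum_eq]; norm_num
  rw [← h]
  apply Summable.tsum_le_tsum _ (summable_sqrt hW x x')
    (((hW.2 x).summable.add (hW.2 x').summable).div_const 2)
  intro y
  rw [show (W x y + W x' y) / 2 = Real.sqrt (((W x y + W x' y) / 2) ^ 2) from
    (Real.sqrt_sq (by have := hW.1 x y; have := hW.1 x' y; positivity)).symm]
  apply Real.sqrt_le_sqrt
  nlinarith [hW.1 x y, hW.1 x' y, sq_nonneg (W x y - W x' y)]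

lemma Zb_self (hW : IsChannel W) (x : X) : Zb W x x = 1 := by
  unfold Zb
  rw [show (fun y => Real.sqrt (W x y * W x y)) = W x by
    funext y; exact Real.sqrt_mul_self (hW.1 x y)]
  exact (hW.2 x).tsum_eq

lemma Zmin_nonneg [Nonempty X] (hW : IsChannel W) : 0 ≤ Zmin W := by
  apply le_csInf
  · obtain ⟨x⟩ := ‹Nonempty X›; exact ⟨Zb W x x, x, x, rfl⟩
  · rintro z ⟨a, b, rfl⟩; exact Zb_nonneg W a b

lemma Zmin_le (hW : IsChannel W) (a b : X) : Zmin W ≤ Zb W a b :=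
  csInf_le ⟨0, by rintro z ⟨c, d, rfl⟩; exact Zb_nonneg W c d⟩ ⟨a, b, rfl⟩

lemma le_Zmax (hW : IsChannel W) {a b : X} (h : a ≠ b) : Zb W a b ≤ Zmax W :=
  le_csSup ⟨1, by rintro z ⟨c, d, _, rfl⟩; exact Zb_le_one hW c d⟩ ⟨a, b, h, rfl⟩

lemma Zmax_le_one (hq : ∃ a b : X, a ≠ b) (hW : IsChannel W) : Zmax W ≤ 1 := by
  obtain ⟨a, b, hab⟩ := hq
  have hne : {z | ∃ x x', x ≠ x' ∧ z = Zb W x x'}.Nonempty := ⟨Zb W a b, a, b, hab, rfl⟩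
  apply csSup_le hne
  rintro z ⟨c, d, _, rfl⟩; exact Zb_le_one hW c d

lemma Zmax_nonneg (hq : ∃ a b : X, a ≠ b) (hW : IsChannel W) : 0 ≤ Zmax W := by
  obtain ⟨a, b, hab⟩ := hq
  exact (Zb_nonneg W a b).trans (le_Zmax hW hab)



end Aux

section Aux2
lemma pi_tsum {Y : Type*} :
    ∀ (n : ℕ) (f : Fin n → Y → ℝ), (∀ j y, 0 ≤ f j y) → (∀ j, Summable (f j)) →
      Summable (fun y : Fin n → Y => ∏ j, f j (y j)) ∧
        ∑' y : Fin n → Y, ∏ j, f j (y j) = ∏ j, ∑' z, f j z := by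
  intro n
  induction n with
  | zero =>
    intro f _ _
    refine ⟨Summable.of_finite, ?_⟩
    rw [tsum_fintype]
    simp
  | succ n ih =>
    intro f hpos hsum
    set G : (Fin n → Y) → ℝ := fun t => ∏ j, f j.succ (t j) with hG
    obtain ⟨hGsum, hGt⟩ := ih (fun j => f j.succ) (fun j y => hpos _ y) (fun j => hsum _)
    have hGpos : ∀ t, 0 ≤ G t := fun t => Finset.prod_nonneg fun j _ => hpos _ _
    set e : (Y × (Fin n → Y)) ≃ (Fin (n + 1) → Y) :=
      Fin.consEquiv (fun _ => Y) with he
    have hcomp : ∀ p : Y × (Fin n → Y),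
        (∏ j, f j ((e p) j)) = f 0 p.1 * G p.2 := by
      rintro ⟨a, t⟩
      rw [Fin.prod_univ_succ]
      simp [he, hG, Fin.consEquiv]
    have hn0 : Summable fun y => ‖f 0 y‖ := by
      have h : (fun y => ‖f 0 y‖) = f 0 := funext fun y => Real.norm_of_nonneg (hpos 0 y)
      rw [h]; exact hsum 0
    have hnG : Summable fun t => ‖G t‖ := by
      have : (fun t => ‖G t‖) = G := by
        funext t; exact Real.norm_of_nonneg (hGpos t)
      rw [this]; exact hGsum
    have hprod : Summable fun p : Y × (Fin n → Y) => f 0 p.1 * G p.2 :=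
      summable_mul_of_summable_norm hn0 hnG
    have hsumF : Summable fun y : Fin (n + 1) → Y => ∏ j, f j (y j) := by
      rw [← e.summable_iff]
      exact hprod.congr fun p => (hcomp p).symm
    refine ⟨hsumF, ?_⟩
    rw [← e.tsum_eq]
    calc ∑' p : Y × (Fin n → Y), ∏ j, f j ((e p) j)
        = ∑' p : Y × (Fin n → Y), f 0 p.1 * G p.2 := tsum_congr hcomp
      _ = (∑' a, f 0 a) * ∑' t, G t := (tsum_mul_tsum_of_summable_norm hn0 hnG).symm
      _ = ∏ j, ∑' z, f j z := by
          rw [hGt, Fin.prod_univ_succ]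


end Aux2

section Aux3
variable {X Y : Type*} {W : X → Y → ℝ}

lemma tsum_sqrt_prod (hW : IsChannel W) {n : ℕ} (a b : Fin n → X) :
    Summable (fun y : Fin n → Y =>
      Real.sqrt ((∏ j, W (a j) (y j)) * ∏ j, W (b j) (y j))) ∧
      ∑' y : Fin n → Y, Real.sqrt ((∏ j, W (a j) (y j)) * ∏ j, W (b j) (y j)) =
        ∏ j, Zb W (a j) (b j) := by
  have hpt : ∀ y : Fin n → Y,
      Real.sqrt ((∏ j, W (a j) (y j)) * ∏ j, W (b j) (y j)) =
        ∏ j, Real.sqrt (W (a j) (y j) * W (b j) (y j)) := by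
    intro y
    rw [← Finset.prod_mul_distrib,
      sqrt_prod' _ _ fun j _ => mul_nonneg (hW.1 _ _) (hW.1 _ _)]
  obtain ⟨h1, h2⟩ := pi_tsum n (fun j y => Real.sqrt (W (a j) y * W (b j) y))
    (fun j y => Real.sqrt_nonneg _) (fun j => summable_sqrt hW _ _)
  refine ⟨h1.congr fun y => (hpt y).symm, ?_⟩
  rw [tsum_congr hpt, h2]
  rfl

lemma prod_Zb_le (hq : ∃ a b : X, a ≠ b) (hW : IsChannel W) {n : ℕ}
    (a b : Fin n → X) :
    ∏ j, Zb W (a j) (b j) ≤ Zmax W ^ hammingDist a b := by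
  classical
  rw [← Finset.prod_filter_mul_prod_filter_not Finset.univ (fun j => a j ≠ b j)]
  have h2 : ∏ j ∈ Finset.univ.filter (fun j => ¬a j ≠ b j), Zb W (a j) (b j) = 1 := by
    apply Finset.prod_eq_one
    intro j hj
    rw [Finset.mem_filter] at hj
    rw [not_not.mp hj.2]
    exact Zb_self hW _
  rw [h2, mul_one, hammingDist, ← Finset.prod_const]
  apply Finset.prod_le_prod (fun j _ => Zb_nonneg W _ _)
  intro j hj
  rw [Finset.mem_filter] at hj
  exact le_Zmax hW hj.2

lemma prod_Zb_ge [Nonempty X] (hW : IsChannel W) {n : ℕ} (a b : Fin n → X) :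
    Zmin W ^ hammingDist a b ≤ ∏ j, Zb W (a j) (b j) := by
  classical
  rw [← Finset.prod_filter_mul_prod_filter_not Finset.univ (fun j => a j ≠ b j)]
  have h2 : ∏ j ∈ Finset.univ.filter (fun j => ¬a j ≠ b j), Zb W (a j) (b j) = 1 := by
    apply Finset.prod_eq_one
    intro j hj
    rw [Finset.mem_filter] at hj
    rw [not_not.mp hj.2]
    exact Zb_self hW _
  rw [h2, mul_one, hammingDist, ← Finset.prod_const]
  exact Finset.prod_le_prod (fun j _ => Zmin_nonneg hW) (fun j _ => Zmin_le hW _ _)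


end Aux3

lemma summable_finset_sum' {g b : Type*} {f : g → b → ℝ} {s : Finset g}
    (h : ∀ i ∈ s, Summable (f i)) : Summable fun y => ∑ i ∈ s, f i y :=
  (hasSum_sum fun i hi => (h i hi).hasSum).summable


/-- bounds on the Bhattacharyya parameter of the conditioned
subchannel in terms of the partial distance. -/
theorem bhattacharyya_condSubCh_bounds {X Y : Type*} [Fintype X] [Countable Y]
    (hq : 2 ≤ Fintype.card X) (W : X → Y → ℝ) (hW : IsChannel W)
    {ℓ : ℕ} (g : (Fin ℓ → X) → Fin ℓ → X) (hg : Function.Bijective g)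
    (i : Fin ℓ) (up : Fin i → X) (x x' : X) (hxx : x ≠ x') :
    (1 / (Fintype.card X : ℝ) ^ (2 * (ℓ - 1 - i.1))) *
        Zmin W ^ partialDist g i up x x' ≤ Zb (condSubCh W g i up) x x' ∧
      Zb (condSubCh W g i up) x x' ≤
        (Fintype.card X : ℝ) ^ (ℓ - 1 - i.1) *
          Zmax W ^ partialDist g i up x x' := by
  classical
  have hpair : ∃ a b : X, a ≠ b := Fintype.exists_pair_of_one_lt_card (by omega)
  have hXne : Nonempty X := Fintype.card_pos_iff.mp (by omega)
  set m := ℓ - 1 - i.1 with hm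
  set q : ℝ := (Fintype.card X : ℝ) with hqdef
  have hq1 : (1 : ℝ) ≤ q := by
    rw [hqdef]; exact_mod_cast le_trans (by norm_num) hq
  set N : ℝ := q ^ m with hNdef
  have hN1 : (1 : ℝ) ≤ N := one_le_pow₀ hq1
  have hN0 : (0 : ℝ) < N := lt_of_lt_of_le one_pos hN1
  set c : ℝ := 1 / N with hcdef
  have hc0 : 0 ≤ c := by positivity
  set P : (Fin ℓ → X) → (Fin ℓ → Y) → ℝ := fun u y => ∏ j, W (g u j) (y j) with hP
  have hPnn : ∀ u y, 0 ≤ P u y := fun u y => Finset.prod_nonneg fun j _ => hW.1 _ _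
  set S : X → Finset (Fin ℓ → X) := fun ui =>
    Finset.univ.filter
      (fun u => u i = ui ∧ ∀ j : Fin i, u ⟨j.1, j.2.trans i.2⟩ = up j) with hS
  have hcond : ∀ ui y, condSubCh W g i up ui y = c * ∑ u ∈ S ui, P u y := by
    intro ui y
    rw [condSubCh, hS, Finset.sum_filter]
  set D := partialDist g i up x x' with hD
  -- cardinality bound
  have hcard : ∀ ui, ((S ui).card : ℝ) ≤ N := by
    intro ui
    have hinj : ∀ u ∈ S ui, ∀ v ∈ S ui,
        (fun k : Fin m => u ⟨i.1 + 1 + k.1, by omega⟩) =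
          (fun k : Fin m => v ⟨i.1 + 1 + k.1, by omega⟩) → u = v := by
      intro u hu v hv hfe
      rw [hS, Finset.mem_filter] at hu hv
      funext j
      rcases lt_trichotomy j.1 i.1 with h | h | h
      · have h1 := hu.2.2 ⟨j.1, h⟩
        have h2 := hv.2.2 ⟨j.1, h⟩
        have hj : (⟨(⟨j.1, h⟩ : Fin i).1, _⟩ : Fin ℓ) = j := Fin.ext rfl
        rw [hj] at h1 h2
        rw [h1, h2]
      · have hj : j = i := Fin.ext h
        rw [hj, hu.2.1, hv.2.1]
      · have hk : j.1 - i.1 - 1 < m := by omega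
        have := congrFun hfe ⟨j.1 - i.1 - 1, hk⟩
        simp only at this
        have hj : (⟨i.1 + 1 + (j.1 - i.1 - 1), by omega⟩ : Fin ℓ) = j :=
          Fin.ext (by simp; omega)
        rwa [hj] at this
    have := Finset.card_le_card_of_injOn
      (f := fun u (k : Fin m) => u ⟨i.1 + 1 + k.1, by omega⟩)
      (fun u _ => Finset.mem_univ _) (fun u hu v hv h => hinj u hu v hv h)
    have hcardu : (Finset.univ : Finset (Fin m → X)).card = Fintype.card X ^ m := by
      simp [Fintype.card_fun]
    rw [hcardu] at this
    calc ((S ui).card : ℝ) ≤ ((Fintype.card X ^ m : ℕ) : ℝ) := by exact_mod_cast this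
      _ = N := by push_cast [hNdef, hqdef]; ring
  -- per-pair tsum
  have hQ : ∀ u v : Fin ℓ → X,
      Summable (fun y : Fin ℓ → Y => Real.sqrt (P u y * P v y)) ∧
        ∑' y : Fin ℓ → Y, Real.sqrt (P u y * P v y) =
          ∏ j, Zb W (g u j) (g v j) := fun u v => tsum_sqrt_prod hW (g u) (g v)
  -- pointwise forms
  set A : (Fin ℓ → Y) → ℝ := fun y => ∑ u ∈ S x, P u y with hA
  set B : (Fin ℓ → Y) → ℝ := fun y => ∑ v ∈ S x', P v y with hB
  have hAnn : ∀ y, 0 ≤ A y := fun y => Finset.sum_nonneg fun u _ => hPnn u y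
  have hBnn : ∀ y, 0 ≤ B y := fun y => Finset.sum_nonneg fun v _ => hPnn v y
  have hZbeq : Zb (condSubCh W g i up) x x' = ∑' y, c * Real.sqrt (A y * B y) := by
    apply tsum_congr
    intro y
    rw [hcond, hcond]
    rw [show c * A y * (c * B y) = c ^ 2 * (A y * B y) by ring,
      Real.sqrt_mul (sq_nonneg c), Real.sqrt_sq hc0]
  set H : (Fin ℓ → Y) → ℝ := fun y =>
    c * ∑ u ∈ S x, ∑ v ∈ S x', Real.sqrt (P u y * P v y) with hH
  have hFH : ∀ y, c * Real.sqrt (A y * B y) ≤ H y := by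
    intro y
    rw [hH]
    apply mul_le_mul_of_nonneg_left _ hc0
    rw [hA, hB, Finset.sum_mul_sum]
    calc Real.sqrt (∑ u ∈ S x, ∑ v ∈ S x', P u y * P v y)
        ≤ ∑ u ∈ S x, Real.sqrt (∑ v ∈ S x', P u y * P v y) :=
          sqrt_sum_le _ _ fun u _ =>
            Finset.sum_nonneg fun v _ => mul_nonneg (hPnn u y) (hPnn v y)
      _ ≤ ∑ u ∈ S x, ∑ v ∈ S x', Real.sqrt (P u y * P v y) := by
          apply Finset.sum_le_sum
          intro u _
          exact sqrt_sum_le _ _ fun v _ => mul_nonneg (hPnn u y) (hPnn v y)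
  have hHsum : Summable H := by
    apply Summable.mul_left
    exact summable_finset_sum' fun u _ => summable_finset_sum' fun v _ => (hQ u v).1
  have hFsum : Summable fun y => c * Real.sqrt (A y * B y) :=
    Summable.of_nonneg_of_le
      (fun y => mul_nonneg hc0 (Real.sqrt_nonneg _)) hFH hHsum
  -- distance bound for members
  have hDle : ∀ u ∈ S x, ∀ v ∈ S x', D ≤ hammingDist (g u) (g v) := by
    intro u hu v hv
    rw [hS, Finset.mem_filter] at hu hv
    exact Nat.sInf_le ⟨u, v, ⟨hu.2.1, hu.2.2⟩, ⟨hv.2.1, hv.2.2⟩, rfl⟩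
  have hZmax0 : 0 ≤ Zmax W := Zmax_nonneg hpair hW
  have hZmax1 : Zmax W ≤ 1 := Zmax_le_one hpair hW
  constructor
  · -- lower bound
    have hDset : {d | ∃ v w : Fin ℓ → X,
        (v i = x ∧ ∀ j : Fin i, v ⟨j.1, j.2.trans i.2⟩ = up j) ∧
        (w i = x' ∧ ∀ j : Fin i, w ⟨j.1, j.2.trans i.2⟩ = up j) ∧
        hammingDist (g v) (g w) = d}.Nonempty := by
      set v0 : Fin ℓ → X := fun j => if h : j.1 < i.1 then up ⟨j.1, h⟩ else x with hv0
      set w0 : Fin ℓ → X := fun j => if h : j.1 < i.1 then up ⟨j.1, h⟩ else x' with hw0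
      refine ⟨hammingDist (g v0) (g w0), v0, w0, ⟨?_, ?_⟩, ⟨?_, ?_⟩, rfl⟩
      · simp [hv0]
      · intro j
        show v0 ⟨j.1, j.2.trans i.2⟩ = up j
        rw [hv0]
        exact dif_pos j.2
      · simp [hw0]
      · intro j
        show w0 ⟨j.1, j.2.trans i.2⟩ = up j
        rw [hw0]
        exact dif_pos j.2
    obtain ⟨u0, w0, hu0, hw0, hdist0⟩ := Nat.sInf_mem hDset
    have hdist : hammingDist (g u0) (g w0) = D := hdist0
    have hu0S : u0 ∈ S x := by
      rw [hS, Finset.mem_filter]; exact ⟨Finset.mem_univ _, hu0⟩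
    have hw0S : w0 ∈ S x' := by
      rw [hS, Finset.mem_filter]; exact ⟨Finset.mem_univ _, hw0⟩
    have hlow : ∀ y, c * Real.sqrt (P u0 y * P w0 y) ≤ c * Real.sqrt (A y * B y) := by
      intro y
      apply mul_le_mul_of_nonneg_left _ hc0
      apply Real.sqrt_le_sqrt
      apply mul_le_mul (Finset.single_le_sum (fun u _ => hPnn u y) hu0S)
        (Finset.single_le_sum (fun v _ => hPnn v y) hw0S) (hPnn w0 y) (hAnn y)
    have h1 : c * ∑' y : Fin ℓ → Y, Real.sqrt (P u0 y * P w0 y) ≤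
        Zb (condSubCh W g i up) x x' := by
      rw [hZbeq, ← tsum_mul_left]
      exact Summable.tsum_le_tsum hlow (((hQ u0 w0).1).mul_left c) hFsum
    have h2 : c * (Zmin W ^ D) ≤ c * ∑' y : Fin ℓ → Y, Real.sqrt (P u0 y * P w0 y) := by
      apply mul_le_mul_of_nonneg_left _ hc0
      rw [(hQ u0 w0).2, ← hdist]
      exact prod_Zb_ge hW (g u0) (g w0)
    have hfinal : 1 / q ^ (2 * m) * Zmin W ^ D ≤ c * (Zmin W ^ D) := by
      apply mul_le_mul_of_nonneg_right _ (pow_nonneg (Zmin_nonneg hW) D)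
      rw [hcdef]
      apply div_le_div_of_nonneg_left one_pos.le hN0
      rw [hNdef, two_mul, pow_add]
      nlinarith [pow_nonneg (le_trans one_pos.le hq1) m]
    calc 1 / q ^ (2 * m) * Zmin W ^ D ≤ c * (Zmin W ^ D) := hfinal
      _ ≤ _ := le_trans h2 h1
  · -- upper bound
    rw [hZbeq]
    have hstep : ∑' y, c * Real.sqrt (A y * B y) ≤ ∑' y, H y :=
      Summable.tsum_le_tsum hFH hFsum hHsum
    have hHval : ∑' y, H y = c * ∑ u ∈ S x, ∑ v ∈ S x',
        ∑' y : Fin ℓ → Y, Real.sqrt (P u y * P v y) := by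
      rw [hH, tsum_mul_left]
      congr 1
      rw [Summable.tsum_finsetSum fun u _ => summable_finset_sum' fun v _ => (hQ u v).1]
      apply Finset.sum_congr rfl
      intro u _
      rw [Summable.tsum_finsetSum fun v _ => (hQ u v).1]
    have hbound : ∑ u ∈ S x, ∑ v ∈ S x',
        ∑' y : Fin ℓ → Y, Real.sqrt (P u y * P v y) ≤ N * N * Zmax W ^ D := by
      calc ∑ u ∈ S x, ∑ v ∈ S x', ∑' y : Fin ℓ → Y, Real.sqrt (P u y * P v y)
          ≤ ∑ u ∈ S x, ∑ v ∈ S x', Zmax W ^ D := by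
            apply Finset.sum_le_sum; intro u hu
            apply Finset.sum_le_sum; intro v hv
            rw [(hQ u v).2]
            calc ∏ j, Zb W (g u j) (g v j)
                ≤ Zmax W ^ hammingDist (g u) (g v) := prod_Zb_le hpair hW _ _
              _ ≤ Zmax W ^ D :=
                  pow_le_pow_of_le_one hZmax0 hZmax1 (hDle u hu v hv)
        _ = ((S x).card : ℝ) * ((S x').card : ℝ) * Zmax W ^ D := by
            simp [Finset.sum_const, mul_assoc]
        _ ≤ N * N * Zmax W ^ D := by
            apply mul_le_mul_of_nonneg_right _ (pow_nonneg hZmax0 D)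
            exact mul_le_mul (hcard x) (hcard x') (Nat.cast_nonneg _) (le_trans (Nat.cast_nonneg _) (hcard x))
    calc ∑' y, c * Real.sqrt (A y * B y) ≤ ∑' y, H y := hstep
      _ = c * ∑ u ∈ S x, ∑ v ∈ S x', ∑' y : Fin ℓ → Y, Real.sqrt (P u y * P v y) := hHval
      _ ≤ c * (N * N * Zmax W ^ D) := by
          apply mul_le_mul_of_nonneg_left hbound hc0
      _ = N * Zmax W ^ D := by
          have he : c * (N * N * Zmax W ^ D) = (c * N) * (N * Zmax W ^ D) := by ring
          rw [he, hcdef, one_div_mul_cancel hN0.ne', one_mul]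
      _ = q ^ m * Zmax W ^ D := by rw [hNdef]

end Polar
end
end

section
/- For every integer ℓ ≥ 2, (1/ℓ) Σ_{i=0}^{ℓ-1} log_ℓ(i+1) ≥ 1 − (ℓ−1)/(ℓ · ln ℓ); consequently, (1/ℓ) Σ_{i=0}^{ℓ-1} log_ℓ(i+1) → 1 as ℓ → ∞. (This quantity is the exponent of the ℓ×ℓ Reed–Solomon kernel, whose partial distances are D^{(i)} = i+1.) -/
open MeasureTheory Filter Real
open scoped Classical

noncomputable section

namespace Polar

lemma sum_log_ge : ∀ n : ℕ, 1 ≤ n →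
    (n : ℝ) * Real.log n - ((n : ℝ) - 1) ≤
      ∑ i ∈ Finset.range n, Real.log ((i : ℝ) + 1) := by
  intro n hn
  induction n with
  | zero => omega
  | succ m ih =>
    rcases Nat.eq_or_lt_of_le hn with h | h
    · simp [← h]
    · have hm : 1 ≤ m := by omega
      have ihm := ih hm
      rw [Finset.sum_range_succ]
      have hmpos : (0 : ℝ) < m := by exact_mod_cast hm
      have hkey : (m : ℝ) * (Real.log ((m : ℝ) + 1) - Real.log m) ≤ 1 := by
        have h1 : Real.log (((m : ℝ) + 1) / m) ≤ ((m : ℝ) + 1) / m - 1 :=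
          Real.log_le_sub_one_of_pos (by positivity)
        rw [Real.log_div (by positivity) (by positivity)] at h1
        have h2 : ((m : ℝ) + 1) / m - 1 = 1 / m := by field_simp; ring
        rw [h2] at h1
        calc (m : ℝ) * (Real.log ((m : ℝ) + 1) - Real.log m)
            ≤ (m : ℝ) * (1 / m) := by
              apply mul_le_mul_of_nonneg_left h1 (le_of_lt hmpos)
          _ = 1 := by field_simp
      push_cast
      nlinarith [Real.log_nonneg (by linarith : (1:ℝ) ≤ (m:ℝ) + 1)]

/-- the exponent of the Reed–Solomon kernel,
`(1/ℓ) Σ_{i<ℓ} log_ℓ (i+1)`, is at least `1 - (ℓ-1)/(ℓ ln ℓ)` and tends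
to `1` as `ℓ → ∞`. -/
theorem reed_solomon_exponent :
    (∀ ℓ : ℕ, 2 ≤ ℓ →
      1 - ((ℓ : ℝ) - 1) / ((ℓ : ℝ) * Real.log ℓ) ≤
        (1 / (ℓ : ℝ)) * ∑ i ∈ Finset.range ℓ, Real.logb ℓ ((i : ℝ) + 1)) ∧
    Tendsto (fun ℓ : ℕ =>
        (1 / (ℓ : ℝ)) * ∑ i ∈ Finset.range ℓ, Real.logb ℓ ((i : ℝ) + 1))
      atTop (nhds 1) := by
  have hlow : ∀ ℓ : ℕ, 2 ≤ ℓ →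
      1 - ((ℓ : ℝ) - 1) / ((ℓ : ℝ) * Real.log ℓ) ≤
        (1 / (ℓ : ℝ)) * ∑ i ∈ Finset.range ℓ, Real.logb ℓ ((i : ℝ) + 1) := by
    intro ℓ hℓ
    have hℓ1 : (1 : ℝ) < ℓ := by exact_mod_cast hℓ
    have hL : (0 : ℝ) < Real.log ℓ := Real.log_pos hℓ1
    have hℓpos : (0 : ℝ) < ℓ := by linarith
    have hkey := sum_log_ge ℓ (by omega)
    have hsum : ∑ i ∈ Finset.range ℓ, Real.logb ℓ ((i : ℝ) + 1)
        = (∑ i ∈ Finset.range ℓ, Real.log ((i : ℝ) + 1)) / Real.log ℓ := by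
      rw [Finset.sum_div]
      rfl
    rw [hsum]
    set S := ∑ i ∈ Finset.range ℓ, Real.log ((i : ℝ) + 1) with hS
    have hpos : (0 : ℝ) < (ℓ : ℝ) * Real.log ℓ := by positivity
    have heq : (1 / (ℓ : ℝ)) * (S / Real.log ℓ) = S / ((ℓ : ℝ) * Real.log ℓ) := by
      ring
    rw [heq, le_div_iff₀ hpos]
    have : (1 - ((ℓ : ℝ) - 1) / ((ℓ : ℝ) * Real.log ℓ)) * ((ℓ : ℝ) * Real.log ℓ)
        = (ℓ : ℝ) * Real.log ℓ - ((ℓ : ℝ) - 1) := by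
      field_simp
    rw [this]
    exact hkey
  refine ⟨hlow, ?_⟩
  have hup : ∀ ℓ : ℕ, 2 ≤ ℓ →
      (1 / (ℓ : ℝ)) * ∑ i ∈ Finset.range ℓ, Real.logb ℓ ((i : ℝ) + 1) ≤ 1 := by
    intro ℓ hℓ
    have hℓ1 : (1 : ℝ) < ℓ := by exact_mod_cast hℓ
    have hℓpos : (0 : ℝ) < ℓ := by linarith
    have hsum : ∑ i ∈ Finset.range ℓ, Real.logb ℓ ((i : ℝ) + 1) ≤ (ℓ : ℝ) * 1 := by
      calc ∑ i ∈ Finset.range ℓ, Real.logb ℓ ((i : ℝ) + 1)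
          ≤ ∑ i ∈ Finset.range ℓ, (1 : ℝ) := by
            apply Finset.sum_le_sum
            intro i hi
            have hi' : (i : ℝ) + 1 ≤ ℓ := by
              have := Finset.mem_range.mp hi
              exact_mod_cast Nat.succ_le_of_lt this
            calc Real.logb ℓ ((i : ℝ) + 1) ≤ Real.logb ℓ ℓ :=
                  Real.logb_le_logb_of_le hℓ1 (by positivity) hi'
              _ = 1 := Real.logb_self_eq_one hℓ1
        _ = (ℓ : ℝ) * 1 := by simp
    calc (1 / (ℓ : ℝ)) * ∑ i ∈ Finset.range ℓ, Real.logb ℓ ((i : ℝ) + 1)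
        ≤ (1 / (ℓ : ℝ)) * ((ℓ : ℝ) * 1) := by
          apply mul_le_mul_of_nonneg_left hsum (by positivity)
      _ = 1 := by field_simp
  have hlim : Tendsto (fun ℓ : ℕ => 1 - 1 / Real.log ℓ) atTop (nhds 1) := by
    have h1 : Tendsto (fun ℓ : ℕ => Real.log ℓ) atTop atTop :=
      Real.tendsto_log_atTop.comp tendsto_natCast_atTop_atTop
    have h2 : Tendsto (fun ℓ : ℕ => 1 / Real.log ℓ) atTop (nhds 0) := by
      simp only [one_div]; exact h1.inv_tendsto_atTop
    simpa using (tendsto_const_nhds (x := (1:ℝ))).sub h2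
  apply tendsto_of_tendsto_of_tendsto_of_le_of_le' hlim tendsto_const_nhds
  · filter_upwards [eventually_ge_atTop 2] with ℓ hℓ
    have hℓ1 : (1 : ℝ) < ℓ := by exact_mod_cast hℓ
    have hL : (0 : ℝ) < Real.log ℓ := Real.log_pos hℓ1
    have hℓpos : (0 : ℝ) < ℓ := by linarith
    have h1 : ((ℓ : ℝ) - 1) / ((ℓ : ℝ) * Real.log ℓ) ≤ 1 / Real.log ℓ := by
      rw [div_le_div_iff₀ (by positivity) hL]
      nlinarith
    have := hlow ℓ hℓ
    linarith
  · filter_upwards [eventually_ge_atTop 2] with ℓ hℓ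
    exact hup ℓ hℓ
end Polar
end
end
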